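/- If η ∈ ℂ^V satisfies μ_p · ‖η‖_{ℓ^p} < 1, then the forward Born series Σ_{j=1}^∞ K_j(η, …, η) converges absolutely in ℂ^{R×S}. -/

import Mathlib

open scoped ENNReal

/-- The ℓ^p norm of a finitely indexed family, `p ∈ [1, ∞]`. -/
noncomputable def lpNorm (p : ℝ≥0∞) {ι E : Type*} [Fintype ι] [SeminormedAddCommGroup E]
    (f : ι → E) : ℝ :=
  if p = ∞ then ⨆ i, ‖f i‖ else (∑ i, ‖f i‖ ^ p.toReal) ^ (1 / p.toReal)

variable {V R S : Type*} [Fintype V] [DecidableEq V] [Fintype R] [Fintype S]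

/-- The multilinear forward Born operator: `bornK α0 B G C j` is `K_j`, mapping
`(η_1, …, η_j)` (given as the first `j` values of an `ℕ`-indexed family) to
`(r, s) ↦ (−α0)^j (B D_{η_1} G D_{η_2} G ⋯ G D_{η_j} C)(r, s)`; `K_0 := 0` is junk. -/
noncomputable def bornK (α0 : ℝ) (B : Matrix R V ℂ) (G : Matrix V V ℂ) (C : Matrix V S ℂ) :
    ℕ → (ℕ → V → ℂ) → R × S → ℂ
  | 0, _ => 0
  | j + 1, η => fun rs =>
      (-(α0 : ℂ)) ^ (j + 1) *
        (B * Matrix.diagonal (η 0) *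
          (List.ofFn fun i : Fin j => G * Matrix.diagonal (η (i.1 + 1))).prod * C) rs.1 rs.2

/-- `μ_p = α0 · max_{v ∈ V} ‖row v of G‖_{ℓ^q}` (this depends only on `q`). -/
noncomputable def muConst (α0 : ℝ) (q : ℝ≥0∞) (G : Matrix V V ℂ) : ℝ :=
  α0 * ⨆ v : V, lpNorm q (G v)

/-- `ν_p = α0 · (Σ_{r ∈ R} ‖row r of B‖_q^p)^{1/p} · (Σ_{s ∈ S} ‖column s of C‖_q^p)^{1/p}`,
with maxima replacing sums when `p = ∞`. -/
noncomputable def nuConst (α0 : ℝ) (p q : ℝ≥0∞) (B : Matrix R V ℂ) (C : Matrix V S ℂ) : ℝ :=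
  α0 * lpNorm p (fun r : R => lpNorm q (B r)) * lpNorm p (fun s : S => lpNorm q fun v => C v s)

/-- `C_p = min_{‖η‖_p = 1} ‖K_1 η‖_p`. -/
noncomputable def CpConst (p : ℝ≥0∞) (α0 : ℝ) (B : Matrix R V ℂ) (G : Matrix V V ℂ)
    (C : Matrix V S ℂ) : ℝ :=
  sInf {t : ℝ | ∃ η : V → ℂ, lpNorm p η = 1 ∧ t = lpNorm p (bornK α0 B G C 1 fun _ => η)}

section helpers
variable {ι : Type*} [Fintype ι]

lemma lpNorm_nonneg (p : ℝ≥0∞) {E : Type*} [SeminormedAddCommGroup E] (f : ι → E) :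
    0 ≤ lpNorm p f := by
  unfold lpNorm
  split
  · exact Real.iSup_nonneg fun i => norm_nonneg _
  · positivity

lemma lpNorm_le_of_le_smul (p : ℝ≥0∞) (hp : 1 ≤ p) [Nonempty ι] {K : ℝ} (hK : 0 ≤ K)
    (f g : ι → ℂ) (h : ∀ i, ‖f i‖ ≤ K * ‖g i‖) : lpNorm p f ≤ K * lpNorm p g := by
  unfold lpNorm
  split
  · refine ciSup_le fun i => (h i).trans ?_
    exact mul_le_mul_of_nonneg_left
      (le_ciSup (f := fun i => ‖g i‖) (Set.Finite.bddAbove (Set.finite_range _)) i) hK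
  · rename_i hptop
    have ht0 : 0 < p.toReal :=
      ENNReal.toReal_pos (ne_of_gt (lt_of_lt_of_le zero_lt_one hp)) hptop
    calc (∑ i, ‖f i‖ ^ p.toReal) ^ (1 / p.toReal)
        ≤ (∑ i, (K * ‖g i‖) ^ p.toReal) ^ (1 / p.toReal) := by
          refine Real.rpow_le_rpow (by positivity) ?_ (by positivity)
          exact Finset.sum_le_sum fun i _ =>
            Real.rpow_le_rpow (norm_nonneg _) (h i) ht0.le
      _ = K * (∑ i, ‖g i‖ ^ p.toReal) ^ (1 / p.toReal) := by
          have : ∀ i, (K * ‖g i‖) ^ p.toReal = K ^ p.toReal * ‖g i‖ ^ p.toReal := fun i =>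
            Real.mul_rpow hK (norm_nonneg _)
          simp only [this, ← Finset.mul_sum]
          rw [Real.mul_rpow (by positivity) (by positivity), one_div,
            Real.rpow_rpow_inv hK ht0.ne']

lemma lpNorm_le_card_mul (p : ℝ≥0∞) (hp : 1 ≤ p) [Nonempty ι] {M : ℝ} (hM : 0 ≤ M)
    (f : ι → ℂ) (h : ∀ i, ‖f i‖ ≤ M) :
    lpNorm p f ≤ (Fintype.card ι : ℝ) * M := by
  have hcard : (1 : ℝ) ≤ (Fintype.card ι : ℝ) := by
    exact_mod_cast Fintype.card_pos
  unfold lpNorm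
  split
  · exact ciSup_le fun i => (h i).trans (le_mul_of_one_le_left hM hcard)
  · rename_i hptop
    have ht0 : 0 < p.toReal :=
      ENNReal.toReal_pos (ne_of_gt (lt_of_lt_of_le zero_lt_one hp)) hptop
    have ht1 : 1 ≤ p.toReal := by
      simpa using ENNReal.toReal_mono hptop hp
    calc (∑ i, ‖f i‖ ^ p.toReal) ^ (1 / p.toReal)
        ≤ (∑ _i : ι, M ^ p.toReal) ^ (1 / p.toReal) := by
          refine Real.rpow_le_rpow (by positivity) ?_ (by positivity)
          exact Finset.sum_le_sum fun i _ => Real.rpow_le_rpow (norm_nonneg _) (h i) ht0.le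
      _ = (Fintype.card ι : ℝ) ^ (1 / p.toReal) * M := by
          rw [Finset.sum_const, Finset.card_univ, nsmul_eq_mul,
            Real.mul_rpow (by positivity) (by positivity), one_div,
            Real.rpow_rpow_inv hM ht0.ne']
      _ ≤ (Fintype.card ι : ℝ) * M := by
          refine mul_le_mul_of_nonneg_right ?_ hM
          calc (Fintype.card ι : ℝ) ^ (1 / p.toReal)
              ≤ (Fintype.card ι : ℝ) ^ (1 : ℝ) :=
                Real.rpow_le_rpow_of_exponent_le hcard (by
                  rw [div_le_one ht0]; exact ht1)
            _ = (Fintype.card ι : ℝ) := Real.rpow_one _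

lemma holder_sum (p q : ℝ≥0∞) (hp : 1 ≤ p) (hq : 1 ≤ q) (hpq : 1 / p + 1 / q = 1)
    [Nonempty ι] (f g : ι → ℂ) :
    ‖∑ i, f i * g i‖ ≤ lpNorm p f * lpNorm q g := by
  have step1 : ‖∑ i, f i * g i‖ ≤ ∑ i, ‖f i‖ * ‖g i‖ := by
    refine (norm_sum_le _ _).trans ?_
    simp
  simp only [one_div] at hpq
  by_cases hptop : p = ∞
  · subst hptop
    rw [ENNReal.inv_top, zero_add, ENNReal.inv_eq_one] at hpq
    subst hpq
    refine step1.trans ?_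
    simp only [lpNorm, if_pos rfl, if_neg ENNReal.one_ne_top, ENNReal.toReal_one,
      Real.rpow_one, div_one]
    calc ∑ i, ‖f i‖ * ‖g i‖
        ≤ ∑ i, (⨆ j, ‖f j‖) * ‖g i‖ :=
          Finset.sum_le_sum fun i _ => mul_le_mul_of_nonneg_right
            (le_ciSup (f := fun j => ‖f j‖) (Set.Finite.bddAbove (Set.finite_range _)) i)
            (norm_nonneg _)
      _ = (⨆ j, ‖f j‖) * ∑ i, ‖g i‖ := by rw [← Finset.mul_sum]
  by_cases hqtop : q = ∞
  · subst hqtop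
    rw [ENNReal.inv_top, add_zero, ENNReal.inv_eq_one] at hpq
    subst hpq
    refine step1.trans ?_
    simp only [lpNorm, if_pos rfl, if_neg ENNReal.one_ne_top, ENNReal.toReal_one,
      Real.rpow_one, div_one]
    calc ∑ i, ‖f i‖ * ‖g i‖
        ≤ ∑ i, ‖f i‖ * (⨆ j, ‖g j‖) :=
          Finset.sum_le_sum fun i _ => mul_le_mul_of_nonneg_left
            (le_ciSup (f := fun j => ‖g j‖) (Set.Finite.bddAbove (Set.finite_range _)) i)
            (norm_nonneg _)
      _ = (∑ i, ‖f i‖) * (⨆ j, ‖g j‖) := by rw [← Finset.sum_mul]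
  · have hp1 : 1 < p := by
      rcases hp.lt_or_eq with h | h
      · exact h
      · exfalso
        rw [← h, inv_one] at hpq
        have hq0 : q⁻¹ = 0 := by
          have h1 : (1:ℝ≥0∞) + q⁻¹ = 1 + 0 := by simpa using hpq
          exact (ENNReal.add_right_inj ENNReal.one_ne_top).mp h1
        exact hqtop (by simpa using hq0)
    have hc : p.toReal.HolderConjugate q.toReal := by
      rw [Real.holderConjugate_iff]; constructor
      · simpa using ENNReal.toReal_strict_mono hptop hp1
      · rw [← ENNReal.toReal_inv, ← ENNReal.toReal_inv, ← ENNReal.toReal_add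
          (ENNReal.inv_ne_top.2 (zero_lt_one.trans_le hp).ne')
          (ENNReal.inv_ne_top.2 (zero_lt_one.trans_le hq).ne'), hpq, ENNReal.toReal_one]
    refine step1.trans ?_
    have := Real.inner_le_Lp_mul_Lq_of_nonneg (s := Finset.univ)
      (f := fun i => ‖f i‖) (g := fun i => ‖g i‖) hc
      (fun i _ => norm_nonneg _) (fun i _ => norm_nonneg _)
    simp only [lpNorm, if_neg hptop, if_neg hqtop]
    exact this

end helpers

/- STATEMENT 3: If `μ_p ‖η‖_p < 1`, the forward Born series `Σ_{j=1}^∞ K_j(η, …, η)`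
converges absolutely in `ℂ^{R×S}`, i.e. the series of `ℓ^p` norms of its terms is summable. -/
theorem forward_born_series_converges [Nonempty V] [Nonempty R] [Nonempty S]
    (p q : ℝ≥0∞) (hp : 1 ≤ p) (hq : 1 ≤ q) (hpq : 1 / p + 1 / q = 1)
    (α0 : ℝ) (hα0 : 0 < α0) (B : Matrix R V ℂ) (G : Matrix V V ℂ) (C : Matrix V S ℂ)
    (η : V → ℂ) (hη : muConst α0 q G * lpNorm p η < 1) :
    Summable (fun j : ℕ => lpNorm p (bornK α0 B G C (j + 1) fun _ => η)) := by
  classical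
  simp only [muConst] at hη
  set np := lpNorm p η with hnp_def
  have hnp : 0 ≤ np := lpNorm_nonneg p η
  set g0 : ℝ := ⨆ v : V, lpNorm q (G v) with hg0_def
  have hg0 : 0 ≤ g0 := Real.iSup_nonneg fun v => lpNorm_nonneg q _
  have hrow : ∀ v, lpNorm q (G v) ≤ g0 := fun v =>
    le_ciSup (f := fun v => lpNorm q (G v)) (Set.Finite.bddAbove (Set.finite_range _)) v
  have hρ0 : 0 ≤ α0 * g0 * np := by positivity
  have hρ1 : α0 * g0 * np < 1 := hη
  set bmax : ℝ := ⨆ r : R, lpNorm q (B r) with hbmax_def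
  have hbmax : 0 ≤ bmax := Real.iSup_nonneg fun r => lpNorm_nonneg q _
  have hBrow : ∀ r, lpNorm q (B r) ≤ bmax := fun r =>
    le_ciSup (f := fun r => lpNorm q (B r)) (Set.Finite.bddAbove (Set.finite_range _)) r
  set cmax : ℝ := ⨆ vs : V × S, ‖C vs.1 vs.2‖ with hcmax_def
  have hcmax : 0 ≤ cmax := Real.iSup_nonneg fun vs => norm_nonneg _
  have hC : ∀ v s, ‖C v s‖ ≤ cmax := fun v s =>
    le_ciSup (f := fun vs : V × S => ‖C vs.1 vs.2‖) (Set.Finite.bddAbove (Set.finite_range _))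
      (v, s)
  have hqp : 1 / q + 1 / p = 1 := by rw [add_comm]; exact hpq
  -- the key inductive estimate
  have key : ∀ j : ℕ, ∀ v s, ‖(((G * Matrix.diagonal η) ^ j) * C) v s‖ ≤ (g0 * np) ^ j * cmax := by
    intro j
    induction j with
    | zero => intro v s; simpa using hC v s
    | succ j ih =>
      intro v s
      have expand : (((G * Matrix.diagonal η) ^ (j + 1)) * C) v s
          = ∑ w, G v w * (η w * (((G * Matrix.diagonal η) ^ j) * C) w s) := by
        rw [pow_succ', Matrix.mul_assoc, Matrix.mul_assoc, Matrix.mul_apply]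
        refine Finset.sum_congr rfl fun w _ => ?_
        rw [Matrix.diagonal_mul]
      rw [expand]
      refine (holder_sum q p hq hp hqp (G v)
        (fun w => η w * (((G * Matrix.diagonal η) ^ j) * C) w s)).trans ?_
      have h2 : lpNorm p (fun w => η w * (((G * Matrix.diagonal η) ^ j) * C) w s)
          ≤ ((g0 * np) ^ j * cmax) * np := by
        refine lpNorm_le_of_le_smul p hp (by positivity) _ η fun w => ?_
        rw [norm_mul, mul_comm]
        exact mul_le_mul_of_nonneg_right (ih w s) (norm_nonneg _)
      calc lpNorm q (G v) * lpNorm p (fun w => η w * (((G * Matrix.diagonal η) ^ j) * C) w s)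
          ≤ g0 * (((g0 * np) ^ j * cmax) * np) :=
            mul_le_mul (hrow v) h2 (lpNorm_nonneg _ _) hg0
        _ = (g0 * np) ^ (j + 1) * cmax := by ring
  -- entrywise bound on bornK
  have entry : ∀ (j : ℕ) (rs : R × S), ‖bornK α0 B G C (j + 1) (fun _ => η) rs‖
      ≤ (α0 * bmax * np * cmax) * (α0 * g0 * np) ^ j := by
    intro j rs
    have hfn : (List.ofFn fun i : Fin j => G * Matrix.diagonal ((fun _ : ℕ => η) (i.1 + 1))).prod
        = (G * Matrix.diagonal η) ^ j := by
      simp [List.ofFn_const]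
    have hrw : bornK α0 B G C (j + 1) (fun _ => η) rs
        = (-(α0 : ℂ)) ^ (j + 1) *
          ((B * Matrix.diagonal η) * (((G * Matrix.diagonal η) ^ j) * C)) rs.1 rs.2 := by
      simp only [bornK, hfn, Matrix.mul_assoc]
    rw [hrw, norm_mul, norm_pow, norm_neg, Complex.norm_real, Real.norm_eq_abs,
      abs_of_pos hα0]
    have expand : ((B * Matrix.diagonal η) * (((G * Matrix.diagonal η) ^ j) * C)) rs.1 rs.2
        = ∑ w, B rs.1 w * (η w * (((G * Matrix.diagonal η) ^ j) * C) w rs.2) := by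
      rw [Matrix.mul_apply]
      refine Finset.sum_congr rfl fun w _ => ?_
      rw [Matrix.mul_diagonal]; ring
    rw [expand]
    have h1 := holder_sum q p hq hp hqp (B rs.1)
      (fun w => η w * (((G * Matrix.diagonal η) ^ j) * C) w rs.2)
    have h2 : lpNorm p (fun w => η w * (((G * Matrix.diagonal η) ^ j) * C) w rs.2)
        ≤ ((g0 * np) ^ j * cmax) * np := by
      refine lpNorm_le_of_le_smul p hp (by positivity) _ η fun w => ?_
      rw [norm_mul, mul_comm]
      exact mul_le_mul_of_nonneg_right (key j w rs.2) (norm_nonneg _)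
    calc α0 ^ (j + 1) * ‖∑ w, B rs.1 w * (η w * (((G * Matrix.diagonal η) ^ j) * C) w rs.2)‖
        ≤ α0 ^ (j + 1) * (bmax * (((g0 * np) ^ j * cmax) * np)) := by
          refine mul_le_mul_of_nonneg_left (h1.trans ?_) (by positivity)
          exact mul_le_mul (hBrow rs.1) h2 (lpNorm_nonneg _ _) hbmax
      _ = (α0 * bmax * np * cmax) * (α0 * g0 * np) ^ j := by ring
  -- conclude by comparison with a geometric series
  have hA : 0 ≤ α0 * bmax * np * cmax := by positivity
  refine Summable.of_nonneg_of_le (fun j => lpNorm_nonneg _ _)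
    (fun j => ?_)
    (((summable_geometric_of_lt_one hρ0 hρ1).mul_left
      ((Fintype.card (R × S) : ℝ) * (α0 * bmax * np * cmax))))
  have := lpNorm_le_card_mul p hp (ι := R × S)
    (M := (α0 * bmax * np * cmax) * (α0 * g0 * np) ^ j) (by positivity)
    (bornK α0 B G C (j + 1) fun _ => η) (entry j)
  calc lpNorm p (bornK α0 B G C (j + 1) fun _ => η)
      ≤ (Fintype.card (R × S) : ℝ) * ((α0 * bmax * np * cmax) * (α0 * g0 * np) ^ j) := this
    _ = (Fintype.card (R × S) : ℝ) * (α0 * bmax * np * cmax) * (α0 * g0 * np) ^ j := by ring
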